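/- Let Λ be a commutative ring with (2g)! invertible, V = ⊕_{i=-g}^{g} V_i an sl₂-module as above, and 0 ≤ n ≤ g. Then the map v ↦ (n!)^{-1}·e^n(v) defines an isomorphism of Λ-modules V_{-n}[f] → V_n[e], with inverse v ↦ (n!)^{-1}·f^n(v). In particular, e^i restricted to V_{-n}[f] is injective for all i ≤ n. -/
import Mathlib

section Aux

variable {Λ : Type*} [CommRing Λ] {M : Type*} [AddCommGroup M] [Module Λ M]

lemma aux_unit_nat {g : ℕ} (hΛ : IsUnit ((Nat.factorial (2 * g) : Λ)))
    {m : ℕ} (h1 : 1 ≤ m) (h2 : m ≤ 2 * g) : IsUnit ((m : ℕ) : Λ) := by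
  exact isUnit_of_dvd_unit (Nat.cast_dvd_cast (Nat.dvd_factorial h1 h2)) hΛ

variable {V : ℤ → Submodule Λ M} {e h f : Module.End Λ M}

lemma aux_pow_mem (he : ∀ i : ℤ, ∀ v ∈ V i, e v ∈ V (i + 2)) :
    ∀ (k : ℕ) (i : ℤ) (v : M), v ∈ V i → (e ^ k) v ∈ V (i + 2 * k) := by
  intro k
  induction k with
  | zero => intro i v hv; simpa using hv
  | succ k ih =>
    intro i v hv
    have : (e ^ (k + 1)) v = e ((e ^ k) v) := by
      rw [pow_succ', Module.End.mul_apply]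
    rw [this]
    have := he _ _ (ih i v hv)
    convert this using 2
    push_cast; ring

lemma aux_fe (he : ∀ i : ℤ, ∀ v ∈ V i, e v ∈ V (i + 2))
    (hh : ∀ i : ℤ, ∀ v ∈ V i, h v = i • v)
    (hefh : e * f - f * e = h) {n : ℕ} {v : M} (hv : v ∈ V (-(n : ℤ)))
    (hfv : f v = 0) :
    ∀ k : ℕ, f ((e ^ (k + 1)) v) = (((k : ℤ) + 1) * ((n : ℤ) - k)) • (e ^ k) v := by
  have hfe : ∀ x : M, f (e x) = e (f x) - h x := by
    intro x
    have h2 : e (f x) - f (e x) = h x := by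
      have := congrArg (fun T : Module.End Λ M => T x) hefh
      simpa using this
    rw [eq_sub_iff_add_eq, ← h2]; abel
  intro k
  induction k with
  | zero =>
    have : (e ^ (0 + 1)) v = e v := by simp
    rw [this, hfe, hfv, map_zero, hh _ _ hv]
    simp
  | succ k ih =>
    have hstep : (e ^ (k + 1 + 1)) v = e ((e ^ (k + 1)) v) := by
      rw [pow_succ', Module.End.mul_apply]
    rw [hstep, hfe, ih, map_zsmul]
    have hmem : (e ^ (k + 1)) v ∈ V (-(n : ℤ) + 2 * (k + 1)) := aux_pow_mem he _ _ _ hv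
    rw [hh _ _ hmem]
    have : (e ^ (k + 1)) v = e ((e ^ k) v) := by rw [pow_succ', Module.End.mul_apply]
    rw [this]
    rw [← sub_smul]
    congr 1
    push_cast; ring

lemma aux_fjej (he : ∀ i : ℤ, ∀ v ∈ V i, e v ∈ V (i + 2))
    (hh : ∀ i : ℤ, ∀ v ∈ V i, h v = i • v)
    (hefh : e * f - f * e = h) {n : ℕ} {v : M} (hv : v ∈ V (-(n : ℤ)))
    (hfv : f v = 0) :
    ∀ j : ℕ, (f ^ j) ((e ^ j) v) =
      (∏ t ∈ Finset.range j, (((t : ℤ) + 1) * ((n : ℤ) - t))) • v := by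
  intro j
  induction j with
  | zero => simp
  | succ j ih =>
    have h1 : (f ^ (j + 1)) ((e ^ (j + 1)) v) = (f ^ j) (f ((e ^ (j + 1)) v)) := by
      rw [pow_succ, Module.End.mul_apply]
    rw [h1, aux_fe he hh hefh hv hfv j, map_zsmul, ih, smul_smul,
      Finset.prod_range_succ]
    congr 1; ring

lemma aux_evanish {g : ℕ} (hg : 1 ≤ g) (hΛ : IsUnit ((Nat.factorial (2 * g) : Λ)))
    (hbound : ∀ i : ℤ, (g : ℤ) < |i| → V i = ⊥)
    (he : ∀ i : ℤ, ∀ v ∈ V i, e v ∈ V (i + 2))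
    (hh : ∀ i : ℤ, ∀ v ∈ V i, h v = i • v)
    (hefh : e * f - f * e = h) {n : ℕ} (hn : n ≤ g) {v : M} (hv : v ∈ V (-(n : ℤ)))
    (hfv : f v = 0) :
    ∀ k : ℕ, n + 1 ≤ k → (e ^ k) v = 0 := by
  have key : ∀ d : ℕ, ∀ k : ℕ, n + 1 ≤ k → n + 1 + g ≤ k + d → (e ^ k) v = 0 := by
    intro d
    induction d with
    | zero =>
      intro k hk1 hk2
      have hmem : (e ^ k) v ∈ V (-(n : ℤ) + 2 * k) := aux_pow_mem he _ _ _ hv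
      have hb : V (-(n : ℤ) + 2 * k) = ⊥ := by
        apply hbound
        rw [abs_of_nonneg (by omega)]
        omega
      rw [hb] at hmem
      simpa using hmem
    | succ d ih =>
      intro k hk1 hk2
      by_cases hcase : (g : ℤ) < |(-(n : ℤ) + 2 * k)|
      · have hmem : (e ^ k) v ∈ V (-(n : ℤ) + 2 * k) := aux_pow_mem he _ _ _ hv
        rw [hbound _ hcase] at hmem
        simpa using hmem
      · push_neg at hcase
        have hkg : 2 * k ≤ g + n := by
          rw [abs_of_nonneg (by omega)] at hcase
          omega
        have hnext : (e ^ (k + 1)) v = 0 := ih (k + 1) (by omega) (by omega)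
        have hfe := aux_fe he hh hefh hv hfv k
        rw [hnext, map_zero] at hfe
        have hu : IsUnit ((((k : ℤ) + 1) * ((n : ℤ) - k) : ℤ) : Λ) := by
          have h1 : IsUnit (((k + 1 : ℕ) : Λ)) :=
            aux_unit_nat hΛ (by omega) (by omega)
          have h2 : IsUnit (((k - n : ℕ) : Λ)) :=
            aux_unit_nat hΛ (by omega) (by omega)
          have heq : ((((k : ℤ) + 1) * ((n : ℤ) - k) : ℤ) : Λ) =
              -(((k + 1 : ℕ) : Λ) * ((k - n : ℕ) : Λ)) := by
            push_cast [Nat.cast_sub (by omega : n ≤ k)]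
            ring
          rw [heq]
          exact (h1.mul h2).neg
        have := hfe.symm
        rw [← Int.cast_smul_eq_zsmul Λ] at this
        obtain ⟨u, hu'⟩ := hu
        rw [← hu'] at this
        have h3 := congrArg (fun x => u⁻¹ • x) this
        simpa [← Units.smul_def, inv_smul_smul] using h3
  intro k hk
  exact key (n + 1 + g) k hk (by omega)

lemma aux_prod_fact (n : ℕ) :
    (∏ t ∈ Finset.range n, (((t : ℤ) + 1) * ((n : ℤ) - t))) =
      ((Nat.factorial n * Nat.factorial n : ℕ) : ℤ) := by
  have h1 : (∏ t ∈ Finset.range n, (((t : ℤ) + 1) * ((n : ℤ) - t))) =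
      ((∏ t ∈ Finset.range n, ((t + 1) * (n - t)) : ℕ) : ℤ) := by
    rw [Nat.cast_prod]
    apply Finset.prod_congr rfl
    intro t ht
    rw [Finset.mem_range] at ht
    push_cast [Nat.cast_sub (by omega : t ≤ n)]
    ring
  rw [h1]
  congr 1
  rw [Finset.prod_mul_distrib, Finset.prod_range_add_one_eq_factorial]
  have h2 : ∀ m : ℕ, (∏ t ∈ Finset.range m, (m - t)) = Nat.factorial m := by
    intro m
    induction m with
    | zero => simp
    | succ m ihm =>
      rw [Finset.prod_range_succ' (fun t => m + 1 - t) m]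
      simp only [Nat.succ_sub_succ_eq_sub, Nat.sub_zero]
      rw [ihm, Nat.factorial_succ, Nat.mul_comm]
  rw [h2]

/-- The key one-sided lemma. -/
lemma aux_key {g : ℕ} (hg : 1 ≤ g) (hΛ : IsUnit ((Nat.factorial (2 * g) : Λ)))
    (hbound : ∀ i : ℤ, (g : ℤ) < |i| → V i = ⊥)
    (he : ∀ i : ℤ, ∀ v ∈ V i, e v ∈ V (i + 2))
    (hh : ∀ i : ℤ, ∀ v ∈ V i, h v = i • v)
    (hefh : e * f - f * e = h) {n : ℕ} (hn : n ≤ g) {v : M} (hv : v ∈ V (-(n : ℤ)))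
    (hfv : f v = 0) :
    (e ^ n) v ∈ V (n : ℤ) ∧ e ((e ^ n) v) = 0 ∧
      (f ^ n) ((e ^ n) v) = (Nat.factorial n * Nat.factorial n) • v := by
  refine ⟨?_, ?_, ?_⟩
  · have := aux_pow_mem he n _ _ hv
    have heq : (-(n : ℤ) + 2 * n) = (n : ℤ) := by ring
    rwa [heq] at this
  · have : e ((e ^ n) v) = (e ^ (n + 1)) v := by
      rw [pow_succ', Module.End.mul_apply]
    rw [this]
    exact aux_evanish hg hΛ hbound he hh hefh hn hv hfv (n + 1) le_rfl
  · rw [aux_fjej he hh hefh hv hfv n, aux_prod_fact n, natCast_zsmul]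

end Aux

theorem stmt_11 (Λ : Type*) [CommRing Λ] (g : ℕ) (hg : 1 ≤ g)
    (hΛ : IsUnit ((Nat.factorial (2 * g) : Λ)))
    (M : Type*) [AddCommGroup M] [Module Λ M]
    (V : ℤ → Submodule Λ M)
    (hdirect : DirectSum.IsInternal V)
    (hbound : ∀ i : ℤ, (g : ℤ) < |i| → V i = ⊥)
    (e h f : Module.End Λ M)
    (he : ∀ i : ℤ, ∀ v ∈ V i, e v ∈ V (i + 2))
    (hf : ∀ i : ℤ, ∀ v ∈ V i, f v ∈ V (i - 2))
    (hh : ∀ i : ℤ, ∀ v ∈ V i, h v = i • v)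
    (hefh : e * f - f * e = h)
    (n : ℕ) (hn : n ≤ g) :
    (∀ v ∈ V (-(n : ℤ)), f v = 0 →
      (e ^ n) v ∈ V (n : ℤ) ∧ e ((e ^ n) v) = 0 ∧
        (f ^ n) ((e ^ n) v) = (Nat.factorial n * Nat.factorial n) • v) ∧
    (∀ w ∈ V (n : ℤ), e w = 0 →
      (f ^ n) w ∈ V (-(n : ℤ)) ∧ f ((f ^ n) w) = 0 ∧
        (e ^ n) ((f ^ n) w) = (Nat.factorial n * Nat.factorial n) • w) ∧
    (∀ i ≤ n, ∀ v ∈ V (-(n : ℤ)), f v = 0 → ∀ v' ∈ V (-(n : ℤ)), f v' = 0 →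
      (e ^ i) v = (e ^ i) v' → v = v') := by
  -- dual data
  set V' : ℤ → Submodule Λ M := fun i => V (-i) with hV'
  have hbound' : ∀ i : ℤ, (g : ℤ) < |i| → V' i = ⊥ := by
    intro i hi
    exact hbound (-i) (by rwa [abs_neg])
  have he' : ∀ i : ℤ, ∀ v ∈ V' i, f v ∈ V' (i + 2) := by
    intro i v hv
    have := hf (-i) v hv
    have heq : (-i - 2) = -(i + 2) := by ring
    rwa [heq] at this
  have hh' : ∀ i : ℤ, ∀ v ∈ V' i, (-h) v = i • v := by
    intro i v hv
    have := hh (-i) v hv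
    simp only [LinearMap.neg_apply, this, neg_smul, neg_neg]
  have hefh' : f * e - e * f = -h := by
    rw [← hefh]; abel
  refine ⟨?_, ?_, ?_⟩
  · intro v hv hfv
    exact aux_key hg hΛ hbound he hh hefh hn hv hfv
  · intro w hw hew
    have hw' : w ∈ V' (-(n : ℤ)) := by
      show w ∈ V (- -(n : ℤ)); rwa [neg_neg]
    exact aux_key hg hΛ hbound' he' hh' hefh' hn hw' hew
  · intro i hi v hv hfv v' hv' hfv' heq
    set u := v - v' with hu
    have hum : u ∈ V (-(n : ℤ)) := sub_mem hv hv'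
    have hfu : f u = 0 := by rw [hu, map_sub, hfv, hfv', sub_zero]
    have heu : (e ^ i) u = 0 := by rw [hu, map_sub, heq, sub_self]
    have h0 := aux_fjej he hh hefh hum hfu i
    rw [heu, map_zero] at h0
    have hu' : IsUnit (((∏ t ∈ Finset.range i, (((t : ℤ) + 1) * ((n : ℤ) - t))) : ℤ) : Λ) := by
      have hcast : (((∏ t ∈ Finset.range i, (((t : ℤ) + 1) * ((n : ℤ) - t))) : ℤ) : Λ) =
          ∏ t ∈ Finset.range i, ((((t + 1 : ℕ)) : Λ) * (((n - t : ℕ)) : Λ)) := by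
        push_cast
        apply Finset.prod_congr rfl
        intro t ht
        rw [Finset.mem_range] at ht
        rw [Nat.cast_sub (by omega : t ≤ n)]
      rw [hcast]
      apply Finset.prod_induction _ IsUnit (fun a b => IsUnit.mul) isUnit_one
      intro t ht
      rw [Finset.mem_range] at ht
      exact IsUnit.mul (aux_unit_nat hΛ (by omega) (by omega))
        (aux_unit_nat hΛ (by omega) (by omega))
    rw [← Int.cast_smul_eq_zsmul Λ] at h0
    obtain ⟨uu, huu⟩ := hu'
    rw [← huu] at h0
    have h4 := congrArg (fun x => uu⁻¹ • x) h0.symm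
    have h5 : u = 0 := by simpa [← Units.smul_def, inv_smul_smul] using h4
    exact sub_eq_zero.mp h5
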